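/- For s ∈ (1, √2], the core [c₂, c₁] of the tent map T_s decomposes as J₁ ∪ J₂ with J₁ = [c₂, π_s] and J₂ = [π_s, c₁], where π_s = s/(s+1); moreover T_s(J₁) = J₂ and T_s(J₂) = J₁, and the restriction of T_s² to J₁ is topologically conjugate to the tent map T_{s²} restricted to [0, s²/2]. -/

import Mathlib

noncomputable def tent (s x : ℝ) : ℝ := s * (1 - |1 - 2 * x|) / 2

open Set

lemma tent_left {s x : ℝ} (hx : x ≤ 1/2) : tent s x = s * x := by
  unfold tent; rw [abs_of_nonneg (by linarith)]; ring

lemma tent_right {s x : ℝ} (hx : 1/2 ≤ x) : tent s x = s * (1 - x) := by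
  unfold tent; rw [abs_of_nonpos (by linarith)]; ring

lemma img_incr (p a b : ℝ) (hp : 0 < p) (hab : a ≤ b) :
    (fun x => p * x) '' Icc a b = Icc (p*a) (p*b) := by
  ext y; simp only [mem_image, mem_Icc]
  constructor
  · rintro ⟨x, ⟨h1, h2⟩, rfl⟩; constructor <;> nlinarith
  · rintro ⟨h1, h2⟩
    refine ⟨y / p, ⟨?_, ?_⟩, ?_⟩
    · rw [le_div_iff₀ hp]; nlinarith
    · rw [div_le_iff₀ hp]; nlinarith
    · field_simp
  
lemma img_anti (p c a b : ℝ) (hp : 0 < p) (hab : a ≤ b) :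
    (fun x => p * (c - x)) '' Icc a b = Icc (p*(c-b)) (p*(c-a)) := by
  ext y; simp only [mem_image, mem_Icc]
  constructor
  · rintro ⟨x, ⟨h1, h2⟩, rfl⟩; constructor <;> nlinarith
  · rintro ⟨h1, h2⟩
    refine ⟨c - y / p, ⟨?_, ?_⟩, ?_⟩
    · have : y / p ≤ c - a := by rw [div_le_iff₀ hp]; nlinarith
      linarith
    · have : c - b ≤ y / p := by rw [le_div_iff₀ hp]; nlinarith
      linarith
    · field_simp; ring

/-- Renormalization of the tent map: for `s ∈ (1,√2]` the core decomposes as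
`[c₂,π] ∪ [π,c₁]`, the two halves are exchanged by `T_s`, and `T_s²` on the left
half is topologically conjugate to `T_{s²}` on `[0, s²/2]`. -/
theorem stmt8 (s : ℝ) (hs : s ∈ Ioc (1:ℝ) (Real.sqrt 2)) :
    Icc (tent s (tent s (1/2))) (tent s (1/2)) =
      Icc (tent s (tent s (1/2))) (s / (s + 1)) ∪ Icc (s / (s + 1)) (tent s (1/2)) ∧
    tent s '' Icc (tent s (tent s (1/2))) (s / (s + 1)) =
      Icc (s / (s + 1)) (tent s (1/2)) ∧
    tent s '' Icc (s / (s + 1)) (tent s (1/2)) =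
      Icc (tent s (tent s (1/2))) (s / (s + 1)) ∧
    ∃ h : ℝ → ℝ, ContinuousOn h (Icc (tent s (tent s (1/2))) (s / (s + 1))) ∧
      InjOn h (Icc (tent s (tent s (1/2))) (s / (s + 1))) ∧
      h '' Icc (tent s (tent s (1/2))) (s / (s + 1)) = Icc (0:ℝ) (s^2 / 2) ∧
      ∀ x ∈ Icc (tent s (tent s (1/2))) (s / (s + 1)),
        h ((tent s)^[2] x) = tent (s^2) (h x) := by
  obtain ⟨hs1, hsq⟩ := hs
  have h2 : s^2 ≤ 2 := by
    nlinarith [Real.sq_sqrt (by norm_num : (0:ℝ) ≤ 2), Real.sqrt_nonneg 2]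
  have hsp : (0:ℝ) < s := by linarith
  have hm1 : (0:ℝ) < s - 1 := by linarith
  have hp1 : (0:ℝ) < s + 1 := by linarith
  have hc1 : tent s (1/2) = s/2 := by
    unfold tent; norm_num
  have hc2 : tent s (tent s (1/2)) = s*(2-s)/2 := by
    rw [hc1]; unfold tent
    rw [show (1 - 2*(s/2)) = 1 - s by ring, abs_of_nonpos (by linarith)]; ring
  -- basic inequalities
  have hπhalf : (1:ℝ)/2 ≤ s/(s+1) := by
    rw [le_div_iff₀ hp1]; nlinarith
  have hπc1 : s/(s+1) ≤ s/2 := by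
    rw [div_le_div_iff₀ hp1 (by norm_num)]; nlinarith
  have hc2half : s*(2-s)/2 ≤ 1/2 := by nlinarith
  have hc2π : s*(2-s)/2 ≤ s/(s+1) := by
    rw [div_le_div_iff₀ (by norm_num) hp1]; nlinarith
  have hc3π : s/(s+1) ≤ s * (s*(2-s)/2) := by
    rw [div_le_iff₀ hp1]; nlinarith
  have hc1le1 : s/2 ≤ 1 := by nlinarith
  have hπfix : s * (1 - s/(s+1)) = s/(s+1) := by field_simp; ring
  rw [hc2, hc1]
  refine ⟨(Icc_union_Icc_eq_Icc hc2π hπc1).symm, ?_, ?_, ?_⟩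
  · -- image of left half
    rw [(Icc_union_Icc_eq_Icc hc2half hπhalf).symm, image_union]
    have i1 : tent s '' Icc (s*(2-s)/2) (1/2) = Icc (s*(s*(2-s)/2)) (s*(1/2)) := by
      rw [image_congr (fun x hx => tent_left hx.2), img_incr _ _ _ hsp hc2half]
    have i2 : tent s '' Icc (1/2) (s/(s+1)) = Icc (s*(1-s/(s+1))) (s*(1-1/2)) := by
      rw [image_congr (fun x hx => tent_right hx.1), img_anti _ _ _ _ hsp hπhalf]
    rw [i1, i2, hπfix, show s*(1-1/2) = s/2 by ring, show s*(1/2) = s/2 by ring]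
    exact union_eq_right.mpr (Icc_subset_Icc_left hc3π)
  · -- image of right half
    have i2 : tent s '' Icc (s/(s+1)) (s/2) = Icc (s*(1-s/2)) (s*(1-s/(s+1))) := by
      rw [image_congr (fun x hx => tent_right (le_trans hπhalf hx.1)),
        img_anti _ _ _ _ hsp hπc1]
    rw [i2, hπfix, show s*(1-s/2) = s*(2-s)/2 by ring]
  · -- the conjugacy
    refine ⟨fun x => (s+1)/(s-1) * (s/(s+1) - x), ?_, ?_, ?_, ?_⟩
    · exact (Continuous.continuousOn (by continuity))
    · intro a _ b _ hab
      have hq : (s+1)/(s-1) ≠ 0 := by positivity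
      have := mul_left_cancel₀ hq hab
      linarith
    · rw [img_anti _ _ _ _ (by positivity) hc2π]
      have e1 : (s+1)/(s-1) * (s/(s+1) - s/(s+1)) = 0 := by rw [sub_self, mul_zero]
      have e2 : (s+1)/(s-1) * (s/(s+1) - s*(2-s)/2) = s^2/2 := by field_simp; ring
      rw [e1, e2]
    · intro x hx
      show (s+1)/(s-1) * (s/(s+1) - (tent s)^[2] x) = tent (s^2) ((s+1)/(s-1) * (s/(s+1) - x))
      have hq : (0:ℝ) < (s+1)/(s-1) := by positivity
      have hit : (tent s)^[2] x = tent s (tent s x) := by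
        rw [Function.iterate_succ_apply', Function.iterate_one]
      have hxπ : x * (s+1) ≤ s := (le_div_iff₀ hp1).mp hx.2
      rcases le_or_gt x (1/2) with hx12 | hx12
      · -- left branch
        have ht1 : tent s x = s * x := tent_left hx12
        have htx : 1/2 ≤ s * x := by nlinarith [hx.1]
        have ht2 : tent s (s * x) = s * (1 - s * x) := tent_right htx
        have hh : 1/2 ≤ (s+1)/(s-1) * (s/(s+1) - x) := by
          rw [div_mul_eq_mul_div, le_div_iff₀ hm1]
          have : (s+1) * (s/(s+1) - x) = s - (s+1)*x := by field_simp
          rw [this]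
          linarith [mul_le_mul_of_nonneg_left hx12 hp1.le]
        rw [hit, ht1, ht2, tent_right hh]
        field_simp
        ring
      · -- right branch
        have ht1 : tent s x = s * (1 - x) := tent_right hx12.le
        have htx : 1/2 ≤ s * (1 - x) := by nlinarith
        have ht2 : tent s (s * (1 - x)) = s * (1 - s * (1 - x)) := tent_right htx
        have hh : (s+1)/(s-1) * (s/(s+1) - x) ≤ 1/2 := by
          rw [div_mul_eq_mul_div, div_le_iff₀ hm1]
          have : (s+1) * (s/(s+1) - x) = s - (s+1)*x := by field_simp
          rw [this]
          linarith [mul_le_mul_of_nonneg_left hx12.le hp1.le]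
        rw [hit, ht1, ht2, tent_left hh]
        field_simp
        ring
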